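/- arXiv:2001.10760 — 4 statements merged into one kernel-verified Lean document; each statement's English description precedes it below -/
import Mathlib

section
/- The assignments ρ⁺_{z,r}(e₀) = (q^{-1}z/(q−q^{-1})) a†, ρ⁺_{z,r}(e₁) = (qz/(q−q^{-1})) a, ρ⁺_{z,r}(k₀) = r q^{2D}, ρ⁺_{z,r}(k₁) = r^{-1} q^{-2D} satisfy the defining relations of the Borel subalgebra U_q(b⁺) of quantum affine sl₂; in particular the quantum Serre relations [e_i,[e_i,[e_i,e_{σ(i)}]_{q²}]₁]_{q^{-2}} = 0 hold for i ∈ {0,1}. -/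
noncomputable section

open Finsupp Matrix

/-- The infinite-dimensional space `W = ⊕_{j≥0} ℂ w^j`. -/
abbrev Wsp : Type := ℕ →₀ ℂ

abbrev EndW : Type := Module.End ℂ Wsp

/-- The basis vector `w^j`. -/
def wv (j : ℕ) : Wsp := Finsupp.single j 1

/-- The linear operator on `W` determined by its values on the basis. -/
def mkOp (g : ℕ → Wsp) : EndW :=
  Finsupp.lsum ℂ fun j => LinearMap.toSpanSingleton ℂ Wsp (g j)

/-- The annihilation operator `a`. -/
def opA : EndW := mkOp fun j => match j with | 0 => 0 | i + 1 => wv i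

/-- The creation operator `a†`. -/
def opAdag (q : ℂ) : EndW := mkOp fun j => (1 - q ^ (2 * (j + 1))) • wv (j + 1)

/-- The diagonal operator `f(D)`. -/
def opDiag (f : ℕ → ℂ) : EndW := mkOp fun j => f j • wv j

/-- `ρ⁺_{z,r}(e₀)`. -/
def rhoE0 (q z : ℂ) : EndW := (q⁻¹ * z / (q - q⁻¹)) • opAdag q

/-- `ρ⁺_{z,r}(e₁)`. -/
def rhoE1 (q z : ℂ) : EndW := (q * z / (q - q⁻¹)) • opA

/-- `ρ⁺_{z,r}(k₀) = r q^{2D}`. -/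
def rhoK0 (q r : ℂ) : EndW := r • opDiag fun j => q ^ (2 * j)

/-- `ρ⁺_{z,r}(k₁) = r⁻¹ q^{-2D}`. -/
def rhoK1 (q r : ℂ) : EndW := r⁻¹ • opDiag fun j => (q ^ (2 * j))⁻¹

/-- The deformed commutator `[x,y]_p = xy - p yx`. -/
def pComm (p : ℂ) (x y : EndW) : EndW := x * y - p • (y * x)

lemma mkOp_wv (g : ℕ → Wsp) (j : ℕ) : mkOp g (wv j) = g j := by simp [mkOp, wv]
lemma endw_ext {f g : EndW} (h : ∀ j, f (wv j) = g (wv j)) : f = g := by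
  refine Finsupp.lhom_ext fun j b => ?_
  have hb : (Finsupp.single j b : Wsp) = b • wv j := by simp [wv, Finsupp.smul_single]
  rw [hb, _root_.map_smul, _root_.map_smul, h]
lemma opA_wv0 : opA (wv 0) = 0 := by simp [opA, mkOp_wv]
lemma opA_wvs (j : ℕ) : opA (wv (j + 1)) = wv j := by simp [opA, mkOp_wv]
lemma opAdag_wv (q : ℂ) (j : ℕ) : opAdag q (wv j) = (1 - q ^ (2 * (j + 1))) • wv (j + 1) :=
  mkOp_wv _ j
lemma opDiag_wv (f : ℕ → ℂ) (j : ℕ) : opDiag f (wv j) = f j • wv j := mkOp_wv _ j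

lemma pComm_smul_left (p c : ℂ) (x y : EndW) : pComm p (c • x) y = c • pComm p x y := by
  simp only [pComm, smul_mul_assoc, mul_smul_comm, smul_smul]
  module

lemma coreK0E0 (q : ℂ) : opDiag (fun j => q ^ (2 * j)) * opAdag q
    = q ^ 2 • (opAdag q * opDiag (fun j => q ^ (2 * j))) := by
  refine endw_ext fun j => ?_
  simp only [Module.End.mul_apply, LinearMap.smul_apply, _root_.map_smul,
    opAdag_wv, opDiag_wv, smul_smul]
  match_scalars
  simp only [Nat.mul_add, pow_add]
  ring

lemma coreK1E0 (q : ℂ) (hq0 : q ≠ 0) : opDiag (fun j => (q ^ (2 * j))⁻¹) * opAdag q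
    = (q ^ 2)⁻¹ • (opAdag q * opDiag (fun j => (q ^ (2 * j))⁻¹)) := by
  refine endw_ext fun j => ?_
  simp only [Module.End.mul_apply, LinearMap.smul_apply, _root_.map_smul,
    opAdag_wv, opDiag_wv, smul_smul]
  match_scalars
  simp only [Nat.mul_add, pow_add]
  field_simp
  try ring
  try exact Or.inl trivial

lemma coreK0E1 (q : ℂ) (hq0 : q ≠ 0) : opDiag (fun j => q ^ (2 * j)) * opA
    = (q ^ 2)⁻¹ • (opA * opDiag (fun j => q ^ (2 * j))) := by
  refine endw_ext fun j => ?_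
  cases j with
  | zero => simp [Module.End.mul_apply, opA_wv0, opDiag_wv]
  | succ j =>
    simp only [Module.End.mul_apply, LinearMap.smul_apply, _root_.map_smul,
      opA_wvs, opDiag_wv, smul_smul]
    match_scalars
    simp only [Nat.mul_add, pow_add]
    field_simp
    try ring
    try exact Or.inl trivial

lemma coreK1E1 (q : ℂ) (hq0 : q ≠ 0) : opDiag (fun j => (q ^ (2 * j))⁻¹) * opA
    = q ^ 2 • (opA * opDiag (fun j => (q ^ (2 * j))⁻¹)) := by
  refine endw_ext fun j => ?_
  cases j with
  | zero => simp [Module.End.mul_apply, opA_wv0, opDiag_wv]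
  | succ j =>
    simp only [Module.End.mul_apply, LinearMap.smul_apply, _root_.map_smul,
      opA_wvs, opDiag_wv, smul_smul]
    match_scalars
    simp only [Nat.mul_add, pow_add]
    field_simp
    try ring
    try exact Or.inl trivial

lemma coreKK (f g : ℕ → ℂ) : opDiag f * opDiag g = opDiag g * opDiag f := by
  refine endw_ext fun j => ?_
  simp only [Module.End.mul_apply, _root_.map_smul, opDiag_wv, smul_smul]
  match_scalars
  ring

lemma adag_a (q : ℂ) (n : ℕ) : opAdag q (opA (wv n)) = (1 - q ^ (2 * n)) • wv n := by
  cases n with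
  | zero => simp [opA_wv0]
  | succ m => rw [opA_wvs, opAdag_wv]

lemma pComm_smul_right (p c : ℂ) (x y : EndW) : pComm p x (c • y) = c • pComm p x y := by
  simp only [pComm, smul_mul_assoc, mul_smul_comm, smul_smul]
  module

lemma serre0 (q : ℂ) (hq0 : q ≠ 0) :
    pComm (q ^ 2)⁻¹ (opAdag q) (pComm 1 (opAdag q) (pComm (q ^ 2) (opAdag q) opA)) = 0 := by
  refine endw_ext fun j => ?_
  match j with
  | 0 | 1 | (n + 2) =>
    simp only [pComm, LinearMap.sub_apply, LinearMap.smul_apply, Module.End.mul_apply,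
      map_sub, _root_.map_smul, adag_a, opAdag_wv, opA_wv0, opA_wvs, map_zero, smul_zero,
      LinearMap.zero_apply]
    try simp only [add_assoc, Nat.reduceAdd]
    match_scalars
    all_goals (try simp only [Nat.mul_add, pow_add])
    all_goals (try (field_simp; try ring))

lemma serre1 (q : ℂ) (hq0 : q ≠ 0) :
    pComm (q ^ 2)⁻¹ opA (pComm 1 opA (pComm (q ^ 2) opA (opAdag q))) = 0 := by
  refine endw_ext fun j => ?_
  match j with
  | 0 | 1 | (n + 2) =>
    simp only [pComm, LinearMap.sub_apply, LinearMap.smul_apply, Module.End.mul_apply,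
      map_sub, _root_.map_smul, adag_a, opAdag_wv, opA_wv0, opA_wvs, map_zero, smul_zero,
      LinearMap.zero_apply]
    try simp only [add_assoc, Nat.reduceAdd]
    match_scalars
    all_goals (try simp only [Nat.mul_add, pow_add])
    all_goals (try (field_simp; try ring))

/-- the assignments `ρ⁺_{z,r}` satisfy the defining relations of `U_q(b⁺)`,
in particular the quantum Serre relations. -/
theorem rho_plus_is_representation (q z r : ℂ) (hq0 : q ≠ 0) (hq1 : q ≠ 1) (hqm1 : q ≠ -1)
    (hz : z ≠ 0) (hr : r ≠ 0) :
    rhoK0 q r * rhoE0 q z = q ^ 2 • (rhoE0 q z * rhoK0 q r) ∧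
    rhoK1 q r * rhoE1 q z = q ^ 2 • (rhoE1 q z * rhoK1 q r) ∧
    rhoK0 q r * rhoE1 q z = (q ^ 2)⁻¹ • (rhoE1 q z * rhoK0 q r) ∧
    rhoK1 q r * rhoE0 q z = (q ^ 2)⁻¹ • (rhoE0 q z * rhoK1 q r) ∧
    rhoK0 q r * rhoK1 q r = rhoK1 q r * rhoK0 q r ∧
    pComm (q ^ 2)⁻¹ (rhoE0 q z) (pComm 1 (rhoE0 q z) (pComm (q ^ 2) (rhoE0 q z) (rhoE1 q z))) = 0 ∧
    pComm (q ^ 2)⁻¹ (rhoE1 q z) (pComm 1 (rhoE1 q z) (pComm (q ^ 2) (rhoE1 q z) (rhoE0 q z))) = 0 := by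
  refine ⟨?_, ?_, ?_, ?_, ?_, ?_, ?_⟩
  · simp only [rhoK0, rhoE0, smul_mul_assoc, mul_smul_comm, coreK0E0 q, smul_smul]
    match_scalars
    ring
  · simp only [rhoK1, rhoE1, smul_mul_assoc, mul_smul_comm, coreK1E1 q hq0, smul_smul]
    match_scalars
    ring
  · simp only [rhoK0, rhoE1, smul_mul_assoc, mul_smul_comm, coreK0E1 q hq0, smul_smul]
    match_scalars
    ring
  · simp only [rhoK1, rhoE0, smul_mul_assoc, mul_smul_comm, coreK1E0 q hq0, smul_smul]
    match_scalars
    ring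
  · simp only [rhoK0, rhoK1, smul_mul_assoc, mul_smul_comm, smul_smul]
    rw [coreKK]
    match_scalars
    ring
  · simp only [rhoE0, rhoE1, pComm_smul_left, pComm_smul_right, serre0 q hq0, smul_zero]
  · simp only [rhoE0, rhoE1, pComm_smul_left, pComm_smul_right, serre1 q hq0, smul_zero]
end
end

section
/- The fusion intertwiner τ(r) : W ⊗ V → W defined by τ(r)(w^j ⊗ v⁰) = q^j w^j and τ(r)(w^j ⊗ v¹) = (q^{j+1} − q^{-j-1}) r^{-1} w^{j+1} intertwines the U_q(b⁺)-representations: ρ⁺_{q^{-1}z, q^{-1}r}(u) ∘ τ(r) = τ(r) ∘ (ρ⁺_{z,r} ⊗ π_z)(Δ(u)) for every generator u ∈ {e₀, e₁, k₀, k₁}. -/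
noncomputable section

open Finsupp Matrix

/-- `π_z(e₀) = z E₂₁`. -/
def piE0 (z : ℂ) : Matrix (Fin 2) (Fin 2) ℂ := !![0, 0; z, 0]

/-- `π_z(e₁) = z E₁₂`. -/
def piE1 (z : ℂ) : Matrix (Fin 2) (Fin 2) ℂ := !![0, z; 0, 0]

/-- `π_z(k₀) = diag(q⁻¹, q)`. -/
def piK0 (q : ℂ) : Matrix (Fin 2) (Fin 2) ℂ := !![q⁻¹, 0; 0, q]

/-- `π_z(k₁) = diag(q, q⁻¹)`. -/
def piK1 (q : ℂ) : Matrix (Fin 2) (Fin 2) ℂ := !![q, 0; 0, q⁻¹]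

/-- The operator `X ⊗ Y` on `W ⊗ ℂ²` as a 2×2 matrix over `End(W)`. -/
def tensOp (X : EndW) (Y : Matrix (Fin 2) (Fin 2) ℂ) : Matrix (Fin 2) (Fin 2) EndW :=
  Matrix.of fun i k => Y i k • X

/-- The components of the fusion intertwiner `ι(r) : W → W ⊗ V`,
`ι(r)(w^j) = (q^{-j-1} - q^{j+1}) w^{j+1} ⊗ v⁰ + q^{j+1} r w^j ⊗ v¹`. -/
def iotaC (q r : ℂ) : Fin 2 → EndW :=
  ![mkOp fun j => ((q⁻¹) ^ (j + 1) - q ^ (j + 1)) • wv (j + 1),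
    opDiag fun j => q ^ (j + 1) * r]

/-- The components of the fusion intertwiner `τ(r) : W ⊗ V → W`,
`τ(r)(w^j ⊗ v⁰) = q^j w^j`, `τ(r)(w^j ⊗ v¹) = (q^{j+1} - q^{-j-1}) r⁻¹ w^{j+1}`. -/
def tauC (q r : ℂ) : Fin 2 → EndW :=
  ![opDiag fun j => q ^ j,
    mkOp fun j => ((q ^ (j + 1) - (q⁻¹) ^ (j + 1)) * r⁻¹) • wv (j + 1)]

set_option maxHeartbeats 1000000

lemma tauC0_wv (q r : ℂ) (j : ℕ) : tauC q r 0 (wv j) = q ^ j • wv j := by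
  simp [tauC, opDiag, mkOp_wv]
lemma tauC1_wv (q r : ℂ) (j : ℕ) :
    tauC q r 1 (wv j) = ((q ^ (j + 1) - (q⁻¹) ^ (j + 1)) * r⁻¹) • wv (j + 1) := by
  simp [tauC, mkOp_wv]
lemma rhoE0_wv (q z : ℂ) (j : ℕ) :
    rhoE0 q z (wv j) = (q⁻¹ * z / (q - q⁻¹) * (1 - q ^ (2 * (j + 1)))) • wv (j + 1) := by
  simp [rhoE0, opAdag, mkOp_wv, smul_smul]
lemma rhoE1_wv0 (q z : ℂ) : rhoE1 q z (wv 0) = 0 := by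
  simp [rhoE1, opA, mkOp_wv]
lemma rhoE1_wvS (q z : ℂ) (j : ℕ) :
    rhoE1 q z (wv (j + 1)) = (q * z / (q - q⁻¹)) • wv j := by
  simp [rhoE1, opA, mkOp_wv]
lemma rhoK0_wv (q r : ℂ) (j : ℕ) : rhoK0 q r (wv j) = (r * q ^ (2 * j)) • wv j := by
  simp [rhoK0, opDiag, mkOp_wv, smul_smul]
lemma rhoK1_wv (q r : ℂ) (j : ℕ) : rhoK1 q r (wv j) = (r⁻¹ * (q ^ (2 * j))⁻¹) • wv j := by
  simp [rhoK1, opDiag, mkOp_wv, smul_smul]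


/-- `τ(r)` intertwines `(ρ⁺_{z,r} ⊗ π_z) ∘ Δ` with `ρ⁺_{q⁻¹z,q⁻¹r}` on all
generators `e₀, e₁, k₀, k₁` of `U_q(b⁺)`.  Here `Δ(e_i) = e_i ⊗ 1 + k_i ⊗ e_i` and
`Δ(k_i) = k_i ⊗ k_i`, and composition with the row vector `τ(r)` is `vecMul`. -/
theorem tau_intertwiner (q z r : ℂ) (hq0 : q ≠ 0) (hq1 : q ≠ 1) (hqm1 : q ≠ -1)
    (hz : z ≠ 0) (hr : r ≠ 0) :
    (fun k => rhoE0 q (q⁻¹ * z) * tauC q r k) =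
      Matrix.vecMul (tauC q r) (tensOp (rhoE0 q z) 1 + tensOp (rhoK0 q r) (piE0 z)) ∧
    (fun k => rhoE1 q (q⁻¹ * z) * tauC q r k) =
      Matrix.vecMul (tauC q r) (tensOp (rhoE1 q z) 1 + tensOp (rhoK1 q r) (piE1 z)) ∧
    (fun k => rhoK0 q (q⁻¹ * r) * tauC q r k) =
      Matrix.vecMul (tauC q r) (tensOp (rhoK0 q r) (piK0 q)) ∧
    (fun k => rhoK1 q (q⁻¹ * r) * tauC q r k) =
      Matrix.vecMul (tauC q r) (tensOp (rhoK1 q r) (piK1 q)) := by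
  have hq2 : q - q⁻¹ ≠ 0 := by
    rw [sub_ne_zero]
    intro h
    have h2 : q * q = 1 := by field_simp at h; linear_combination h
    rcases mul_self_eq_one_iff.mp h2 with h1 | h1
    · exact hq1 h1
    · exact hqm1 h1
  refine ⟨?_, ?_, ?_, ?_⟩ <;>
  · funext k
    fin_cases k <;>
    · apply endw_ext
      intro j
      rcases j with _ | i <;>
      · simp only [Matrix.vecMul, dotProduct, Fin.sum_univ_two, tensOp,
          Matrix.add_apply, Matrix.of_apply, Matrix.one_apply, piE0, piE1, piK0, piK1,
          Matrix.cons_val', Matrix.cons_val_zero, Matrix.cons_val_one, Matrix.head_cons,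
          Matrix.head_fin_const, Matrix.empty_val', Matrix.cons_val_fin_one,
          Module.End.mul_apply, LinearMap.add_apply, LinearMap.smul_apply,
          Fin.isValue, if_true, if_false, Fin.zero_eta, Fin.mk_one, one_ne_zero,
          Fin.one_eq_zero_iff, Fin.zero_eq_one_iff, Nat.succ_ne_self, ite_true, ite_false,
          OfNat.ofNat_ne_one, OfNat.one_ne_ofNat]
        simp only [_root_.map_smul, map_zero, map_add, tauC0_wv, tauC1_wv, rhoE0_wv, rhoE1_wv0,
          rhoE1_wvS, rhoK0_wv, rhoK1_wv, smul_smul, smul_zero, zero_smul, add_zero,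
          zero_add, one_smul, mul_zero, zero_mul, ← add_smul]
        all_goals first
        | rfl
        | (congr 1
           · have h1 : q * q⁻¹ = 1 := mul_inv_cancel₀ hq0
             have h3 : q ^ (i+1) * (q ^ (2*(i+1)))⁻¹ = q⁻¹ ^ (i+1) := by
               have e : (q ^ (2*(i+1)) : ℂ) = q ^ (i+1) * q ^ (i+1) := by rw [two_mul, pow_add]
               rw [e, mul_inv, ← mul_assoc, mul_inv_cancel₀ (pow_ne_zero _ hq0), one_mul, inv_pow]
             have hkey : q ^ (i+1+1) - q⁻¹ ^ (i+1+1) =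
                 (q - q⁻¹) * q⁻¹ ^ (i+1) + q * (q ^ (i+1) - q⁻¹ ^ (i+1)) := by
               have e : q * q⁻¹ ^ (i + 1) - q⁻¹ ^ (i + 1) * q = 0 := by ring
               linear_combination e
             rw [hkey, show z * (r⁻¹ * (q ^ (2*(i+1)))⁻¹) * q ^ (i+1) = z * r⁻¹ * q⁻¹ ^ (i+1) from by
               rw [← h3]; ring]
             rw [show q * (q⁻¹ * z) = z from by rw [← mul_assoc, h1, one_mul]]
             simp only [div_mul_eq_mul_div, mul_div_assoc', one_mul]
             rw [add_div' _ _ _ hq2, div_eq_div_iff hq2 hq2]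
             ring)
        | (try have hX : q ^ i ≠ 0 := pow_ne_zero _ hq0
           congr 1 <;>
           · simp only [inv_pow, two_mul, pow_add, pow_succ, pow_zero, pow_one, one_mul,
               mul_inv]
             try generalize q ^ i = X at hX ⊢
             try simp only [div_mul_eq_mul_div, mul_div_assoc']
             try rw [add_div' _ _ _ hq2]
             try rw [div_add' _ _ _ hq2]
             try rw [div_eq_div_iff hq2 hq2]
             try rw [div_eq_iff hq2]
             try rw [eq_div_iff hq2]
             try field_simp
             try ring_nf
             try field_simp
             try ring
             try rw [← sub_eq_zero]
             try field_simp
             try rw [sub_eq_zero]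
             try rw [div_eq_iff (by first | simp [hX, hq0, hr] | simp [hq0, hr])]
             try ring)
end
end

section
/- The maps ι(r) : W → W ⊗ V and τ(r) : W ⊗ V → W form an exact sequence of vector spaces: ι(r) is injective, τ(r) is surjective, and the image of ι(r) equals the kernel of τ(r). -/
noncomputable section

open Finsupp Matrix

/-- `ι(r)` as a linear map `W → W ⊗ V`, identifying `W ⊗ V ≅ W × W` via the basis
`(v⁰, v¹)` of `V`. -/
def iotaL (q r : ℂ) : Wsp →ₗ[ℂ] Wsp × Wsp :=
  LinearMap.prod (iotaC q r 0) (iotaC q r 1)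

/-- `τ(r)` as a linear map `W ⊗ V → W`. -/
def tauL (q r : ℂ) : Wsp × Wsp →ₗ[ℂ] Wsp :=
  LinearMap.coprod (tauC q r 0) (tauC q r 1)


lemma mkOp_single (g : ℕ → Wsp) (j : ℕ) (c : ℂ) :
    mkOp g (Finsupp.single j c) = c • g j := by
  simp [mkOp]

/-- `ι(r)` is injective, `τ(r)` is surjective, and the image of `ι(r)`
equals the kernel of `τ(r)`. -/
theorem iota_tau_exact (q r : ℂ) (hq0 : q ≠ 0) (hq : ∀ n : ℕ, 0 < n → q ^ n ≠ 1)
    (hr : r ≠ 0) :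
    Function.Injective (iotaL q r) ∧ Function.Surjective (tauL q r) ∧
    LinearMap.range (iotaL q r) = LinearMap.ker (tauL q r) := by
  have hqr : ∀ j : ℕ, q ^ (j + 1) * r ≠ 0 := fun j => mul_ne_zero (pow_ne_zero _ hq0) hr
  set Binv : EndW := opDiag fun j => (q ^ (j + 1) * r)⁻¹ with hBinv
  set Dinv : EndW := opDiag fun j => (q ^ j)⁻¹ with hDinv
  have h1 : Binv * iotaC q r 1 = 1 := by
    apply endw_ext; intro j
    simp only [Module.End.mul_apply, iotaC, Matrix.cons_val_one, Matrix.head_cons, Matrix.cons_val_zero,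
      hBinv, opDiag, mkOp_wv, _root_.map_smul, smul_smul, Module.End.one_apply]
    rw [mul_inv_cancel₀ (hqr j), one_smul]
  have h1' : iotaC q r 1 * Binv = 1 := by
    apply endw_ext; intro j
    simp only [Module.End.mul_apply, iotaC, Matrix.cons_val_one, Matrix.head_cons, Matrix.cons_val_zero,
      hBinv, opDiag, mkOp_wv, _root_.map_smul, smul_smul, Module.End.one_apply]
    rw [inv_mul_cancel₀ (hqr j), one_smul]
  have h2 : tauC q r 0 * Dinv = 1 := by
    apply endw_ext; intro j
    simp only [Module.End.mul_apply, tauC, Matrix.cons_val_zero,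
      hDinv, opDiag, mkOp_wv, _root_.map_smul, smul_smul, Module.End.one_apply]
    rw [inv_mul_cancel₀ (pow_ne_zero j hq0), one_smul]
  have h3 : Dinv * tauC q r 0 = 1 := by
    apply endw_ext; intro j
    simp only [Module.End.mul_apply, tauC, Matrix.cons_val_zero,
      hDinv, opDiag, mkOp_wv, _root_.map_smul, smul_smul, Module.End.one_apply]
    rw [mul_inv_cancel₀ (pow_ne_zero j hq0), one_smul]
  have h4 : tauC q r 0 * iotaC q r 0 + tauC q r 1 * iotaC q r 1 = 0 := by
    apply endw_ext; intro j
    simp only [LinearMap.add_apply, Module.End.mul_apply, tauC, iotaC,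
      Matrix.cons_val_zero, Matrix.cons_val_one, Matrix.head_cons, opDiag,
      mkOp_wv, _root_.map_smul, smul_smul, LinearMap.zero_apply]
    rw [← add_smul]
    convert zero_smul ℂ (wv (j + 1)) using 2
    field_simp
    ring
  have h5 : iotaC q r 0 * Binv = -(Dinv * tauC q r 1) := by
    apply endw_ext; intro j
    simp only [Module.End.mul_apply, LinearMap.neg_apply, iotaC, tauC, hBinv, hDinv,
      Matrix.cons_val_zero, Matrix.cons_val_one, Matrix.head_cons, opDiag,
      mkOp_wv, _root_.map_smul, smul_smul]
    rw [← neg_smul]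
    congr 1
    field_simp
    ring
  refine ⟨?_, ?_, ?_⟩
  · intro x y hxy
    have h2' : iotaC q r 1 x = iotaC q r 1 y := congrArg Prod.snd hxy
    calc x = (Binv * iotaC q r 1) x := by rw [h1]; rfl
    _ = (Binv * iotaC q r 1) y := by simp only [Module.End.mul_apply, h2']
    _ = y := by rw [h1]; rfl
  · intro w
    refine ⟨(Dinv w, 0), ?_⟩
    have : tauL q r (Dinv w, 0) = (tauC q r 0 * Dinv) w := by
      simp [tauL, LinearMap.coprod_apply, Module.End.mul_apply]
    rw [this, h2]; rfl
  · apply le_antisymm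
    · rintro ⟨x, y⟩ ⟨z, hz⟩
      simp only [iotaL, LinearMap.prod_apply, Function.prod, Prod.mk.injEq] at hz
      simp only [LinearMap.mem_ker, tauL, LinearMap.coprod_apply, ← hz.1, ← hz.2]
      have := congrFun (congrArg DFunLike.coe h4) z
      simpa [Module.End.mul_apply] using this
    · rintro ⟨x, y⟩ hxy
      simp only [LinearMap.mem_ker, tauL, LinearMap.coprod_apply] at hxy
      refine ⟨Binv y, ?_⟩
      have hy : iotaC q r 1 (Binv y) = y := by
        have := congrFun (congrArg DFunLike.coe h1') y
        simpa [Module.End.mul_apply] using this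
      have hx : iotaC q r 0 (Binv y) = x := by
        have h5y := congrFun (congrArg DFunLike.coe h5) y
        simp only [Module.End.mul_apply, LinearMap.neg_apply] at h5y
        have hty : tauC q r 1 y = -(tauC q r 0 x) := by
          rw [eq_neg_iff_add_eq_zero, add_comm]; exact hxy
        rw [h5y, hty, map_neg, neg_neg]
        have := congrFun (congrArg DFunLike.coe h3) x
        simpa [Module.End.mul_apply] using this
      simp only [iotaL, LinearMap.prod_apply, Function.prod, hx, hy]
end
end

section
/- (Factorization of Q eigenvalues) Suppose Q : ℂ → ℂ satisfies: Q(z) = f z^{2N'} ∏_{j=1}^{M'} (z² − y_j²) for some N', M' ≥ 0, f, y_j ∈ ℂ^×, and the crossing symmetry Q(q^{-1}z^{-1}) = (qz²)^{-2N} Q(z) for all z ∈ ℂ^×, where 0 < |q| < 1. Then M' = 2M is even, N' = N − M (so M ≤ N), and after relabeling, Q(z) = f z^{2(N−M)} ∏_{j=1}^M (z² − y_j²)(z² − q^{-2} y_j^{-2}). -/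
noncomputable section

lemma Qfac_pairing (q : ℂ) (hq : q ≠ 0) :
    ∀ (n : ℕ) (S : Multiset ℂ), S.card = 2 * n → (∀ a ∈ S, a ≠ 0) →
      S.map (fun a => (q⁻¹) ^ 2 * a⁻¹) = S → S.prod = (q⁻¹) ^ (2 * n) →
      ∃ T : Multiset ℂ, T.card = n ∧ (∀ a ∈ T, a ≠ 0) ∧
        S = T + T.map (fun a => (q⁻¹) ^ 2 * a⁻¹) := by
  intro n
  induction n with
  | zero =>
    intro S hcard _ _ _
    have : S = 0 := Multiset.card_eq_zero.mp (by simpa using hcard)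
    exact ⟨0, by simp, by simp, by simp [this]⟩
  | succ n ih =>
    intro S hcard hnz hinv hprod
    set τ : ℂ → ℂ := fun a => (q⁻¹) ^ 2 * a⁻¹ with hτ
    have hqi : (q⁻¹ : ℂ) ≠ 0 := inv_ne_zero hq
    by_cases hfix : ∀ a ∈ S, τ a = a
    · -- all elements are fixed points: ±q⁻¹
      have hmem : ∀ a ∈ S, a = q⁻¹ ∨ a = -q⁻¹ := by
        intro a ha
        have h1 : (q⁻¹) ^ 2 * a⁻¹ = a := hfix a ha
        have h2 : a ≠ 0 := hnz a ha
        have hsq : a * a = (q⁻¹) ^ 2 := by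
          have h3 : a * ((q⁻¹) ^ 2 * a⁻¹) = (q⁻¹) ^ 2 := by field_simp
          rwa [h1] at h3
        have h4 : (a - q⁻¹) * (a + q⁻¹) = 0 := by linear_combination hsq
        rcases mul_eq_zero.mp h4 with h | h
        · exact Or.inl (sub_eq_zero.mp h)
        · exact Or.inr (by linear_combination h)
      set m := S.count q⁻¹ with hm
      set k := S.count (-q⁻¹) with hk
      have hqne : (q⁻¹ : ℂ) ≠ -q⁻¹ := by
        intro h
        have h2 : (2 : ℂ) * q⁻¹ = 0 := by linear_combination h
        rcases mul_eq_zero.mp h2 with h3 | h3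
        · norm_num at h3
        · exact hqi h3
      have hSdec : S = Multiset.replicate m q⁻¹ + Multiset.replicate k (-q⁻¹) := by
        ext b
        rw [Multiset.count_add, Multiset.count_replicate, Multiset.count_replicate]
        by_cases hb1 : b = q⁻¹
        · subst hb1; simp [hqne, Ne.symm hqne, hm]
        · by_cases hb2 : b = -q⁻¹
          · subst hb2; simp [hqne, Ne.symm hqne, hk]
          · have hbn : b ∉ S := by
              intro hb
              rcases hmem b hb with h | h
              · exact hb1 h
              · exact hb2 h
            have hb1' : ¬ ((q⁻¹ : ℂ) = b) := fun h => hb1 h.symm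
            have hb2' : ¬ ((-q⁻¹ : ℂ) = b) := fun h => hb2 h.symm
            simp [Multiset.count_eq_zero.mpr hbn, hb1', hb2']
      have hcardmk : m + k = 2 * (n + 1) := by
        have h := congrArg Multiset.card hSdec
        simp [hcard] at h
        omega
      have h6 : (q⁻¹ : ℂ) ^ (2 * (n + 1)) ≠ 0 := pow_ne_zero _ hqi
      have h5 : (1 : ℂ) * (q⁻¹) ^ (2 * (n + 1)) = (-1) ^ k * (q⁻¹) ^ (2 * (n + 1)) := by
        rw [one_mul]
        calc (q⁻¹ : ℂ) ^ (2 * (n + 1)) = S.prod := hprod.symm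
          _ = (Multiset.replicate m q⁻¹ + Multiset.replicate k (-q⁻¹)).prod := by rw [← hSdec]
          _ = (q⁻¹) ^ m * (-q⁻¹) ^ k := by
              rw [Multiset.prod_add, Multiset.prod_replicate, Multiset.prod_replicate]
          _ = (-1) ^ k * (q⁻¹) ^ (m + k) := by rw [neg_pow, pow_add]; ring
          _ = (-1) ^ k * (q⁻¹) ^ (2 * (n + 1)) := by rw [hcardmk]
      have hk1 : ((-1 : ℂ)) ^ k = 1 := (mul_right_cancel₀ h6 h5).symm
      have hkeven : Even k := by
        rcases Nat.even_or_odd k with h | h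
        · exact h
        · exfalso; rw [Odd.neg_one_pow h] at hk1; norm_num at hk1
      obtain ⟨k', hk'⟩ := hkeven
      have hmeven : ∃ m', m = m' + m' := ⟨m / 2, by omega⟩
      obtain ⟨m', hm'⟩ := hmeven
      have hτq : τ q⁻¹ = q⁻¹ := by simp only [hτ]; field_simp
      have hτq' : τ (-q⁻¹) = -q⁻¹ := by simp only [hτ]; field_simp
      refine ⟨Multiset.replicate m' q⁻¹ + Multiset.replicate k' (-q⁻¹), ?_, ?_, ?_⟩
      · simp; omega
      · intro b hb
        rcases Multiset.mem_add.mp hb with h | h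
        · rw [Multiset.eq_of_mem_replicate h]; exact hqi
        · rw [Multiset.eq_of_mem_replicate h]; simpa using hqi
      · rw [Multiset.map_add, Multiset.map_replicate, Multiset.map_replicate, hτq, hτq',
          hSdec, hm', hk']
        rw [Multiset.replicate_add, Multiset.replicate_add]
        abel
    · push_neg at hfix
      obtain ⟨a, haS, hane⟩ := hfix
      have ha0 : a ≠ 0 := hnz a haS
      have hτaS : τ a ∈ S := by
        rw [← hinv]; exact Multiset.mem_map_of_mem _ haS
      have hτa' : τ a ∈ S.erase a := (Multiset.mem_erase_of_ne hane).mpr hτaS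
      set S' := (S.erase a).erase (τ a) with hS'def
      have hS : S = a ::ₘ τ a ::ₘ S' := by
        rw [hS'def, Multiset.cons_erase hτa', Multiset.cons_erase haS]
      have hττ : τ (τ a) = a := by
        simp only [hτ]
        field_simp
      have hinv' : S'.map τ = S' := by
        have h1 : S.map τ = τ a ::ₘ a ::ₘ S'.map τ := by
          rw [hS]; simp [Multiset.map_cons, hττ]
        rw [hinv, hS] at h1
        have h2 : a ::ₘ τ a ::ₘ S' = a ::ₘ τ a ::ₘ S'.map τ := by
          rw [h1, Multiset.cons_swap]
        exact ((Multiset.cons_inj_right _).mp ((Multiset.cons_inj_right _).mp h2)).symm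
      have hcard' : S'.card = 2 * n := by
        have := congrArg Multiset.card hS
        simp [hcard] at this
        omega
      have hnz' : ∀ b ∈ S', b ≠ 0 := by
        intro b hb
        exact hnz b (by rw [hS]; exact Multiset.mem_cons_of_mem (Multiset.mem_cons_of_mem hb))
      have h2 : a * τ a = (q⁻¹) ^ 2 := by
        simp only [hτ]
        field_simp
        try ring
      have hprod' : S'.prod = (q⁻¹) ^ (2 * n) := by
        have h1 : S.prod = a * (τ a * S'.prod) := by rw [hS]; simp
        rw [hprod] at h1
        have h3 : (q⁻¹ : ℂ) ^ (2 * (n + 1)) = (q⁻¹) ^ 2 * ((q⁻¹) ^ (2 * n)) := by ring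
        rw [h3] at h1
        have h4 : (q⁻¹ : ℂ) ^ 2 * ((q⁻¹) ^ (2 * n)) = (q⁻¹) ^ 2 * S'.prod := by
          linear_combination h1 + S'.prod * h2
        have hq2 : (q⁻¹ : ℂ) ^ 2 ≠ 0 := pow_ne_zero _ hqi
        exact (mul_left_cancel₀ hq2 h4).symm
      obtain ⟨T', hT'card, hT'nz, hT'⟩ := ih S' hcard' hnz' hinv' hprod'
      refine ⟨a ::ₘ T', by simp [hT'card], ?_, ?_⟩
      · intro b hb
        rcases Multiset.mem_cons.mp hb with h | h
        · exact h ▸ ha0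
        · exact hT'nz b h
      · rw [hS, hT']
        simp only [Multiset.map_cons, Multiset.cons_add, Multiset.add_cons]
        rw [Multiset.cons_swap]

open Polynomial in
/-- factorization of Q eigenvalues.  If `Q(z) = f z^{2N'} ∏_j (z² - y_j²)`
with nonzero data and `Q` satisfies the crossing symmetry
`Q(q⁻¹z⁻¹) = (qz²)^{-2N} Q(z)` for `0 < |q| < 1`, then `M' = 2M` is even, `N' = N - M`
(so `M ≤ N`), and after relabeling
`Q(z) = f z^{2(N-M)} ∏_{j=1}^M (z² - y_j²)(z² - q⁻² y_j⁻²)`. -/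
theorem Q_eigenvalue_factorization (N : ℕ) (q : ℂ)
    (hq0 : 0 < ‖q‖) (hq1 : ‖q‖ < 1)
    (Q : ℂ → ℂ) (N' M' : ℕ) (f : ℂ) (y : Fin M' → ℂ)
    (hf : f ≠ 0) (hy : ∀ j, y j ≠ 0)
    (hQ : ∀ z : ℂ, Q z = f * z ^ (2 * N') * ∏ j, (z ^ 2 - (y j) ^ 2))
    (hcross : ∀ z : ℂ, z ≠ 0 →
      Q (q⁻¹ * z⁻¹) = ((q * z ^ 2) ^ (2 * N))⁻¹ * Q z) :
    ∃ M : ℕ, M' = 2 * M ∧ M ≤ N ∧ N' = N - M ∧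
      ∃ y' : Fin M → ℂ, (∀ j, y' j ≠ 0) ∧
        ∀ z : ℂ, Q z = f * z ^ (2 * (N - M)) *
          ∏ j, ((z ^ 2 - (y' j) ^ 2) * (z ^ 2 - (q⁻¹) ^ 2 * ((y' j)⁻¹) ^ 2)) := by
  have hq : q ≠ 0 := by
    intro h
    rw [h] at hq0
    simp at hq0
  -- Step A: the cleaned functional equation
  have hE : ∀ z : ℂ, z ≠ 0 →
      (f * (-1) ^ M' * (∏ j, (y j) ^ 2) * q ^ (2 * N)) * (z ^ 2) ^ (2 * N) *
          ∏ j, (z ^ 2 - (q⁻¹) ^ 2 * ((y j) ^ 2)⁻¹)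
      = (f * q ^ (2 * N')) * (z ^ 2) ^ (2 * N' + M') * ∏ j, (z ^ 2 - (y j) ^ 2) := by
    intro z hz
    have h := hcross z hz
    rw [hQ, hQ] at h
    have hfac : ∀ j : Fin M', ((q⁻¹ * z⁻¹) ^ 2 - (y j) ^ 2)
        = ((-1 : ℂ) * ((y j) ^ 2 * (z⁻¹) ^ 2)) * (z ^ 2 - (q⁻¹) ^ 2 * ((y j) ^ 2)⁻¹) := by
      intro j
      have hyj := hy j
      field_simp
      ring
    have hL : ∏ j, ((q⁻¹ * z⁻¹) ^ 2 - (y j) ^ 2)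
        = ((-1 : ℂ) ^ M' * ((∏ j, (y j) ^ 2) * ((z⁻¹) ^ 2) ^ M')) *
          ∏ j, (z ^ 2 - (q⁻¹) ^ 2 * ((y j) ^ 2)⁻¹) := by
      rw [Finset.prod_congr rfl (fun j _ => hfac j), Finset.prod_mul_distrib]
      congr 1
      rw [Finset.prod_mul_distrib, Finset.prod_const, Finset.prod_mul_distrib,
        Finset.prod_const, Finset.card_univ, Fintype.card_fin]
    rw [hL] at h
    set A : ℂ := ∏ j, (z ^ 2 - (q⁻¹) ^ 2 * ((y j) ^ 2)⁻¹) with hA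
    set B : ℂ := ∏ j, (z ^ 2 - (y j) ^ 2) with hB
    set Yc : ℂ := ∏ j, (y j) ^ 2 with hYc
    set Mz : ℂ := q ^ (2 * N') * q ^ (2 * N) * z ^ (2 * N') * z ^ (2 * M') * z ^ (4 * N)
      with hMz
    calc (f * (-1) ^ M' * Yc * q ^ (2 * N)) * (z ^ 2) ^ (2 * N) * A
        = Mz * (f * (q⁻¹ * z⁻¹) ^ (2 * N') * ((-1) ^ M' * (Yc * ((z⁻¹) ^ 2) ^ M') * A)) := by
          rw [hMz]
          simp only [mul_pow, inv_pow]
          field_simp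
          ring
      _ = Mz * (((q * z ^ 2) ^ (2 * N))⁻¹ * (f * z ^ (2 * N') * B)) := by rw [h]
      _ = (f * q ^ (2 * N')) * (z ^ 2) ^ (2 * N' + M') * B := by
          rw [hMz]
          field_simp
          ring
  set Y : ℂ := ∏ j, (y j) ^ 2 with hY
  set c1 : ℂ := f * (-1) ^ M' * Y * q ^ (2 * N) with hc1
  set c2 : ℂ := f * q ^ (2 * N') with hc2
  have hYne : Y ≠ 0 := Finset.prod_ne_zero_iff.mpr (fun j _ => pow_ne_zero _ (hy j))
  have hc1ne : c1 ≠ 0 := by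
    apply mul_ne_zero (mul_ne_zero (mul_ne_zero hf _) hYne) (pow_ne_zero _ hq)
    exact pow_ne_zero _ (by norm_num)
  have hc2ne : c2 ≠ 0 := mul_ne_zero hf (pow_ne_zero _ hq)
  set P1 : ℂ[X] := ∏ j, (X - C ((y j) ^ 2)) with hP1
  set P2 : ℂ[X] := ∏ j, (X - C ((q⁻¹) ^ 2 * ((y j) ^ 2)⁻¹)) with hP2
  have hP1m : P1.Monic := monic_prod_of_monic _ _ (fun j _ => monic_X_sub_C _)
  have hP2m : P2.Monic := monic_prod_of_monic _ _ (fun j _ => monic_X_sub_C _)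
  have hP1deg : P1.natDegree = M' := by
    rw [hP1, natDegree_prod _ _ (fun j _ => X_sub_C_ne_zero _)]
    simp only [natDegree_X_sub_C, Finset.sum_const, Finset.card_univ, Fintype.card_fin,
      smul_eq_mul, mul_one]
  have hP2deg : P2.natDegree = M' := by
    rw [hP2, natDegree_prod _ _ (fun j _ => X_sub_C_ne_zero _)]
    simp only [natDegree_X_sub_C, Finset.sum_const, Finset.card_univ, Fintype.card_fin,
      smul_eq_mul, mul_one]
  set L : ℂ[X] := C c1 * X ^ (2 * N) * P2 with hLdef
  set R : ℂ[X] := C c2 * X ^ (2 * N' + M') * P1 with hRdef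
  -- L = R
  have hLR : L = R := by
    apply Polynomial.eq_of_infinite_eval_eq
    apply Set.Infinite.mono (s := {z : ℂ | z ≠ 0})
    · intro w hw
      obtain ⟨z, hz2⟩ := IsAlgClosed.exists_pow_nat_eq w (n := 2) (by norm_num)
      have hz : z ≠ 0 := by
        intro h
        rw [h] at hz2
        simp at hz2
        exact hw hz2.symm
      have h := hE z hz
      rw [hz2] at h
      show eval w L = eval w R
      rw [hLdef, hRdef, hP1, hP2]
      simp only [eval_mul, eval_pow, eval_C, eval_X, eval_prod, eval_sub]
      exact h
    · have : ({0}ᶜ : Set ℂ).Infinite := (Set.finite_singleton 0).infinite_compl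
      simpa [Set.compl_singleton_eq] using this
  -- degrees
  have hCXne1 : C c1 * X ^ (2 * N) ≠ 0 :=
    mul_ne_zero (by simpa using hc1ne) (pow_ne_zero _ X_ne_zero)
  have hCXne2 : C c2 * X ^ (2 * N' + M') ≠ 0 :=
    mul_ne_zero (by simpa using hc2ne) (pow_ne_zero _ X_ne_zero)
  have hLdeg : L.natDegree = 2 * N + M' := by
    rw [hLdef, natDegree_mul hCXne1 hP2m.ne_zero, natDegree_C_mul_X_pow _ _ hc1ne, hP2deg]
  have hRdeg : R.natDegree = (2 * N' + M') + M' := by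
    rw [hRdef, natDegree_mul hCXne2 hP1m.ne_zero, natDegree_C_mul_X_pow _ _ hc2ne, hP1deg]
  have hdeg : 2 * N = 2 * N' + M' := by
    have := hLdeg ▸ hRdeg ▸ congrArg natDegree hLR
    omega
  have hLlc : L.leadingCoeff = c1 := by
    rw [hLdef, leadingCoeff_mul, leadingCoeff_mul, leadingCoeff_C, leadingCoeff_X_pow,
      hP2m.leadingCoeff, mul_one, mul_one]
  have hRlc : R.leadingCoeff = c2 := by
    rw [hRdef, leadingCoeff_mul, leadingCoeff_mul, leadingCoeff_C, leadingCoeff_X_pow,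
      hP1m.leadingCoeff, mul_one, mul_one]
  have hlc : c1 = c2 := by rw [← hLlc, ← hRlc, hLR]
  -- cancel to get P2 = P1
  have hP21 : P2 = P1 := by
    apply mul_left_cancel₀ hCXne1
    have : C c2 * X ^ (2 * N' + M') = C c1 * X ^ (2 * N) := by rw [hlc, hdeg]
    conv_rhs => rw [← this]
    exact hLR
  -- multiset equality
  have hS : (Multiset.map (fun j => (y j) ^ 2) Finset.univ.val).map (fun w => (q⁻¹) ^ 2 * w⁻¹)
      = Multiset.map (fun j => (y j) ^ 2) Finset.univ.val := by
    have e1 : P1 = (Multiset.map (fun r => X - C r)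
        (Multiset.map (fun j => (y j) ^ 2) Finset.univ.val)).prod := by
      rw [hP1, Finset.prod_eq_multiset_prod, Multiset.map_map]
      rfl
    have e2 : P2 = (Multiset.map (fun r => X - C r)
        ((Multiset.map (fun j => (y j) ^ 2) Finset.univ.val).map (fun w => (q⁻¹) ^ 2 * w⁻¹))).prod := by
      rw [hP2, Finset.prod_eq_multiset_prod, Multiset.map_map, Multiset.map_map]
      rfl
    have := congrArg Polynomial.roots (e2.symm.trans (hP21.trans e1))
    rwa [roots_multiset_prod_X_sub_C, roots_multiset_prod_X_sub_C] at this
  have hlcU : f * (-1) ^ M' * (∏ j, (y j) ^ 2) * q ^ (2 * N) = f * q ^ (2 * N') := hlc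
  clear hlc hLR hLdeg hRdeg hLlc hRlc hP21 hCXne1 hCXne2
  obtain ⟨M, hM⟩ : ∃ M, M' = 2 * M := ⟨M' / 2, by omega⟩
  have hMN : M ≤ N := by omega
  have hN' : N' = N - M := by omega
  set S : Multiset ℂ := Multiset.map (fun j => (y j) ^ 2) Finset.univ.val with hSdef
  have hScard : S.card = 2 * M := by
    rw [hSdef, Multiset.card_map]
    simp [hM]
  have hSnz : ∀ w ∈ S, w ≠ 0 := by
    intro w hw
    obtain ⟨j, _, hj⟩ := Multiset.mem_map.mp hw
    exact hj ▸ pow_ne_zero _ (hy j)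
  have hSprodY : S.prod = ∏ j, (y j) ^ 2 := by
    rw [hSdef, ← Finset.prod_eq_multiset_prod]
  have hm1 : ((-1 : ℂ)) ^ M' = 1 := by
    rw [hM, pow_mul]
    norm_num
  have hqsplit : q ^ (2 * N) = q ^ (2 * N') * q ^ (2 * M) := by
    rw [← pow_add]
    congr 1
    omega
  have hfq : f * q ^ (2 * N') ≠ 0 := mul_ne_zero hf (pow_ne_zero _ hq)
  have hY1 : (∏ j, (y j) ^ 2) * q ^ (2 * M) = 1 := by
    rw [hm1, hqsplit] at hlcU
    apply mul_right_cancel₀ hfq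
    rw [one_mul]
    linear_combination hlcU
  have hSprod : S.prod = (q⁻¹) ^ (2 * M) := by
    rw [hSprodY, inv_pow]
    exact eq_inv_of_mul_eq_one_left hY1
  obtain ⟨T, hTcard, hTnz, hTS⟩ := Qfac_pairing q hq M S hScard hSnz hS hSprod
  -- enumerate T
  set l : List ℂ := T.toList with hldef
  have hlen : l.length = M := by rw [hldef, Multiset.length_toList, hTcard]
  set g : Fin M → ℂ := fun j => l.get (Fin.cast hlen.symm j) with hgdef
  have hgT : ∀ j, g j ∈ T := by
    intro j
    rw [← Multiset.coe_toList T]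
    exact Multiset.mem_coe.mpr (List.mem_iff_get.mpr ⟨_, rfl⟩)
  have hg0 : ∀ j, g j ≠ 0 := fun j => hTnz _ (hgT j)
  have hsq : ∀ j : Fin M, ∃ w : ℂ, w ^ 2 = g j :=
    fun j => IsAlgClosed.exists_pow_nat_eq (g j) (n := 2) (by norm_num)
  refine ⟨M, hM, hMN, hN', fun j => (hsq j).choose, ?_, ?_⟩
  · intro j h
    have h' : (hsq j).choose = 0 := h
    have h2 := (hsq j).choose_spec
    rw [h'] at h2
    simp at h2
    exact hg0 j h2.symm
  · intro z
    rw [hQ z, hN']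
    congr 1
    have hy'sq : ∀ j, ((hsq j).choose) ^ 2 = g j := fun j => (hsq j).choose_spec
    calc ∏ j, (z ^ 2 - (y j) ^ 2)
        = (S.map (fun r => z ^ 2 - r)).prod := by
          rw [hSdef, Multiset.map_map, ← Finset.prod_eq_multiset_prod]
          rfl
      _ = (T.map (fun r => (z ^ 2 - r) * (z ^ 2 - (q⁻¹) ^ 2 * r⁻¹))).prod := by
          rw [hTS, Multiset.map_add, Multiset.prod_add, Multiset.map_map,
            ← Multiset.prod_map_mul]
          rfl
      _ = (l.map (fun r => (z ^ 2 - r) * (z ^ 2 - (q⁻¹) ^ 2 * r⁻¹))).prod := by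
          conv_lhs => rw [← Multiset.coe_toList T]
          rw [Multiset.map_coe, Multiset.prod_coe]
      _ = ∏ i : Fin l.length, ((z ^ 2 - l.get i) * (z ^ 2 - (q⁻¹) ^ 2 * (l.get i)⁻¹)) := by
          conv_lhs => rw [← List.ofFn_get l]
          rw [List.map_ofFn, List.prod_ofFn]
          rfl
      _ = ∏ j : Fin M, ((z ^ 2 - g j) * (z ^ 2 - (q⁻¹) ^ 2 * (g j)⁻¹)) :=
          (Fin.prod_congr' _ hlen.symm).symm
      _ = ∏ j, ((z ^ 2 - ((hsq j).choose) ^ 2) * (z ^ 2 - (q⁻¹) ^ 2 * (((hsq j).choose)⁻¹) ^ 2)) := by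
          apply Finset.prod_congr rfl
          intro j _
          simp only [inv_pow]
          rw [hy'sq j]
end
end
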